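/- Let G be a nilpotent group, π a set of primes, and for each i let G_i = I_π(γ_i(G)) be the π-isolator of the i-th term of the lower central series of G. Then [G_i, G_j] ≤ G_{i+j} for all natural numbers i, j. -/

import Mathlib

def IsPiNumber (π : Set ℕ) (n : ℕ) : Prop :=
  0 < n ∧ ∀ p : ℕ, p.Prime → p ∣ n → p ∈ π


open Subgroup
open scoped commutatorElement

universe u


/-- Image of the lower central series under a surjective hom. -/
theorem lcs_map_surj {G H : Type u} [Group G] [Group H] (f : G →* H)
    (hf : Function.Surjective f) (n : ℕ) :
    Subgroup.map f ((⊤ : Subgroup G).lowerCentralSeries n) = (⊤ : Subgroup H).lowerCentralSeries n := by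
  induction n with
  | zero => simpa using Subgroup.map_top_of_surjective f hf
  | succ n ih =>
    show Subgroup.map f ⁅(⊤ : Subgroup G).lowerCentralSeries n, (⊤ : Subgroup G)⁆ = ⁅(⊤ : Subgroup H).lowerCentralSeries n, (⊤ : Subgroup H)⁆
    rw [Subgroup.map_commutator, ih, Subgroup.map_top_of_surjective f hf]

/-- Three subgroups lemma modulo a normal subgroup. -/
theorem comm3 {G : Type u} [Group G] (N : Subgroup G) [N.Normal] (H₁ H₂ H₃ : Subgroup G)
    (h1 : ⁅⁅H₂, H₃⁆, H₁⁆ ≤ N) (h2 : ⁅⁅H₃, H₁⁆, H₂⁆ ≤ N) : ⁅⁅H₁, H₂⁆, H₃⁆ ≤ N := by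
  set f := QuotientGroup.mk' N
  have hker : f.ker = N := QuotientGroup.ker_mk' N
  have key : ∀ A B C : Subgroup G, ⁅⁅A, B⁆, C⁆ ≤ N →
      ⁅⁅Subgroup.map f A, Subgroup.map f B⁆, Subgroup.map f C⁆ = ⊥ := by
    intro A B C h
    rw [← Subgroup.map_commutator, ← Subgroup.map_commutator]
    rw [Subgroup.map_eq_bot_iff, hker]
    exact h
  have := commutator_commutator_eq_bot_of_rotate (key _ _ _ h1) (key _ _ _ h2)
  rw [← Subgroup.map_commutator, ← Subgroup.map_commutator, Subgroup.map_eq_bot_iff, hker] at this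
  exact this

/-- `[γ_{i+1}, γ_{j+1}] ≤ γ_{i+j+2}`. -/
theorem lcs_comm {G : Type u} [Group G] (j i : ℕ) :
    ⁅(⊤ : Subgroup G).lowerCentralSeries i, (⊤ : Subgroup G).lowerCentralSeries j⁆ ≤ (⊤ : Subgroup G).lowerCentralSeries (i + j + 1) := by
  induction j generalizing i with
  | zero =>
    exact le_of_eq rfl
  | succ j ih =>
    have : ⁅⁅((⊤ : Subgroup G).lowerCentralSeries j : Subgroup G), (⊤ : Subgroup G)⁆, (⊤ : Subgroup G).lowerCentralSeries i⁆ ≤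
        (⊤ : Subgroup G).lowerCentralSeries (i + (j + 1) + 1) := by
      apply comm3
      · -- ⁅⁅⊤, L i⁆, L j⁆ ≤ N
        calc ⁅⁅(⊤ : Subgroup G), (⊤ : Subgroup G).lowerCentralSeries i⁆, (⊤ : Subgroup G).lowerCentralSeries j⁆
            = ⁅⁅(⊤ : Subgroup G).lowerCentralSeries i, (⊤ : Subgroup G)⁆, (⊤ : Subgroup G).lowerCentralSeries j⁆ := by
              rw [Subgroup.commutator_comm (⊤ : Subgroup G)]
          _ = ⁅((⊤ : Subgroup G).lowerCentralSeries (i+1) : Subgroup G), (⊤ : Subgroup G).lowerCentralSeries j⁆ := rfl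
          _ ≤ (⊤ : Subgroup G).lowerCentralSeries ((i+1) + j + 1) := ih (i+1)
          _ = (⊤ : Subgroup G).lowerCentralSeries (i + (j+1) + 1) := by ring_nf
      · -- ⁅⁅L i, L j⁆, (⊤ : Subgroup G)⁆ ≤ N
        calc ⁅⁅(⊤ : Subgroup G).lowerCentralSeries i, (⊤ : Subgroup G).lowerCentralSeries j⁆, (⊤ : Subgroup G)⁆
            ≤ ⁅((⊤ : Subgroup G).lowerCentralSeries (i + j + 1) : Subgroup G), (⊤ : Subgroup G)⁆ :=
              Subgroup.commutator_mono (ih i) le_rfl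
          _ = (⊤ : Subgroup G).lowerCentralSeries (i + j + 2) := rfl
          _ = (⊤ : Subgroup G).lowerCentralSeries (i + (j+1) + 1) := by ring_nf
    calc ⁅(⊤ : Subgroup G).lowerCentralSeries i, (⊤ : Subgroup G).lowerCentralSeries (j+1)⁆
        = ⁅⁅((⊤ : Subgroup G).lowerCentralSeries j : Subgroup G), (⊤ : Subgroup G)⁆, (⊤ : Subgroup G).lowerCentralSeries i⁆ := by
          rw [Subgroup.commutator_comm]
          rfl
      _ ≤ (⊤ : Subgroup G).lowerCentralSeries (i + (j + 1) + 1) := this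

/-- The lower central series of a subgroup contained in `γ₂` is shifted. -/
theorem lcs_subtype_shift {G : Type u} [Group G] (W : Subgroup G)
    (hW : W ≤ (⊤ : Subgroup G).lowerCentralSeries 1) (r : ℕ) :
    Subgroup.map W.subtype ((⊤ : Subgroup W).lowerCentralSeries r) ≤ (⊤ : Subgroup G).lowerCentralSeries (r + 1) := by
  induction r with
  | zero =>
    show Subgroup.map W.subtype ⊤ ≤ _
    rw [← MonoidHom.range_eq_map, Subgroup.range_subtype]
    exact hW
  | succ r ih =>
    show Subgroup.map W.subtype ⁅(⊤ : Subgroup (↥W)).lowerCentralSeries r, (⊤ : Subgroup ↥W)⁆ ≤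
      ⁅(⊤ : Subgroup G).lowerCentralSeries (r+1), (⊤ : Subgroup G)⁆
    rw [Subgroup.map_commutator]
    exact Subgroup.commutator_mono ih le_top

theorem lcs_subtype_bot {G : Type u} [Group G] (W : Subgroup G) {c : ℕ}
    (h : Subgroup.map W.subtype ((⊤ : Subgroup W).lowerCentralSeries c) ≤ ⊥) :
    (⊤ : Subgroup (↥W)).lowerCentralSeries c = ⊥ := by
  rw [eq_bot_iff]
  intro x hx
  have : (x : G) ∈ (⊥ : Subgroup G) := h ⟨x, hx, rfl⟩
  rw [Subgroup.mem_bot] at this ⊢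
  exact Subtype.ext this

/-- subgroup with class ≤ class of ambient -/
theorem lcs_subtype_bot' {G : Type u} [Group G] (W : Subgroup G) {c : ℕ}
    (hc : (⊤ : Subgroup G).lowerCentralSeries c = ⊥) : (⊤ : Subgroup (↥W)).lowerCentralSeries c = ⊥ :=
  lcs_subtype_bot W (by rw [← hc]; exact Subgroup.lowerCentralSeries_map_subtype_le W c)

/-- Elements of the closure of a pairwise-commuting set commute. -/
theorem closure_comm {G : Type u} [Group G] {S : Set G}
    (hS : ∀ a ∈ S, ∀ b ∈ S, Commute a b) {x y : G}
    (hx : x ∈ Subgroup.closure S) (hy : y ∈ Subgroup.closure S) : Commute x y := by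
  have h1 : Subgroup.closure S ≤ Subgroup.centralizer S := by
    rw [Subgroup.closure_le]
    intro a ha
    show a ∈ Subgroup.centralizer S
    rw [Subgroup.mem_centralizer_iff]
    intro b hb
    exact (hS b hb a ha).eq
  have h2 : Subgroup.closure S ≤ Subgroup.centralizer {y} := by
    rw [Subgroup.closure_le]
    intro a ha
    show a ∈ Subgroup.centralizer {y}
    rw [Subgroup.mem_centralizer_iff]
    intro b hb
    rcases hb with rfl
    exact ((h1 hy) a ha).symm
  have := (h2 hx) y rfl
  exact this.symm

/-- torsion engine: in a group of class ≤ c generated by `k`-power-torsion elements,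
every element is `k`-power torsion. -/
theorem lemmaT (c : ℕ) : ∀ (G : Type u) [Group G], (⊤ : Subgroup G).lowerCentralSeries c = ⊥ →
    ∀ (k : ℕ) (S : Set G), (⊤ : Subgroup G) = Subgroup.closure S →
    (∀ g ∈ S, ∃ e : ℕ, g ^ k ^ e = 1) → ∀ h : G, ∃ e : ℕ, h ^ k ^ e = 1 := by
  induction c with
  | zero =>
    intro G _ hC k S hgen hS h
    rw [Subgroup.lowerCentralSeries_zero] at hC
    have : h ∈ (⊥ : Subgroup G) := by rw [← hC]; trivial
    rw [Subgroup.mem_bot] at this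
    exact ⟨0, by rw [this, one_pow]⟩
  | succ c ih =>
    intro G _ hC k S hgen hS h
    set Γ := (⊤ : Subgroup G).lowerCentralSeries c with hΓdef
    have hcent : ∀ γ ∈ Γ, ∀ g : G, γ * g = g * γ := by
      intro γ hγ g
      have h1 : ⁅γ, g⁆ ∈ ⁅Γ, (⊤ : Subgroup G)⁆ :=
        Subgroup.commutator_mem_commutator hγ (Subgroup.mem_top g)
      have h2 : ⁅γ, g⁆ ∈ (⊤ : Subgroup G).lowerCentralSeries (c + 1) := h1
      rw [hC, Subgroup.mem_bot] at h2
      exact commutatorElement_eq_one_iff_mul_comm.mp h2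
    -- every element of Γ is k-power torsion
    have torsionΓ : ∀ q ∈ Γ, ∃ e : ℕ, q ^ k ^ e = 1 := by
      have mulcase : ∀ x y : G, x ∈ Γ → (∃ e : ℕ, x ^ k ^ e = 1) → (∃ e : ℕ, y ^ k ^ e = 1) →
          ∃ e : ℕ, (x * y) ^ k ^ e = 1 := by
        rintro x y hxΓ ⟨e₁, h₁⟩ ⟨e₂, h₂⟩
        have hcomm : Commute x y := hcent x hxΓ y
        refine ⟨e₁ + e₂, ?_⟩
        rw [hcomm.mul_pow, pow_add, pow_mul, pow_mul, h₁, one_pow, ← pow_mul, mul_comm (k ^ e₁),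
          pow_mul, h₂, one_pow, one_mul]
      have invcase : ∀ x : G, (∃ e : ℕ, x ^ k ^ e = 1) → ∃ e : ℕ, x⁻¹ ^ k ^ e = 1 := by
        rintro x ⟨e, hx⟩
        exact ⟨e, by rw [inv_pow, hx, inv_one]⟩
      match c, hC, hcent, hΓdef with
      | 0, hC, hcent, hΓdef =>
        intro q hqΓ
        have hq : q ∈ Subgroup.closure S := by rw [← hgen]; trivial
        clear hqΓ
        induction hq using Subgroup.closure_induction with
        | mem x hx => exact hS x hx
        | one => exact ⟨0, one_pow _⟩
        | mul x y hx hy ihx ihy =>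
          exact mulcase x y (by rw [hΓdef, Subgroup.lowerCentralSeries_zero]; trivial) ihx ihy
        | inv x hx ihx => exact invcase x ihx
      | c' + 1, hC, hcent, hΓdef =>
        have hΓc : Γ = ⁅(⊤ : Subgroup G).lowerCentralSeries c', (⊤ : Subgroup G)⁆ := hΓdef
        have gentor : ∀ p ∈ (⊤ : Subgroup G).lowerCentralSeries c', ∀ g : G, ∃ e : ℕ, ⁅p, g⁆ ^ k ^ e = 1 := by
          intro p hp g
          have hmem : ∀ x : G, ⁅p, x⁆ ∈ Γ := fun x => by
            rw [hΓc]
            exact Subgroup.commutator_mem_commutator hp (Subgroup.mem_top x)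
          have key : ∀ a b : G, ⁅p, a * b⁆ = ⁅p, a⁆ * (a * ⁅p, b⁆ * a⁻¹) := by
            intro a b
            simp only [commutatorElement_def]
            group
          have hmul : ∀ a b : G, ⁅p, a * b⁆ = ⁅p, a⁆ * ⁅p, b⁆ := by
            intro a b
            rw [key a b, ← hcent _ (hmem b) a, mul_inv_cancel_right]
          let φp : G →* G :=
            { toFun := fun x => ⁅p, x⁆
              map_one' := commutatorElement_one_right p
              map_mul' := hmul }
          let Tp : Subgroup G :=
            { carrier := {x : G | ∃ e : ℕ, φp x ^ k ^ e = 1}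
              one_mem' := ⟨0, by simp⟩
              mul_mem' := by
                rintro a b ha hb
                show ∃ e : ℕ, φp (a * b) ^ k ^ e = 1
                rw [map_mul]
                exact mulcase _ _ (hmem a) ha hb
              inv_mem' := by
                rintro a ha
                show ∃ e : ℕ, φp a⁻¹ ^ k ^ e = 1
                rw [map_inv]
                exact invcase _ ha }
          have hST : Subgroup.closure S ≤ Tp := by
            rw [Subgroup.closure_le]
            intro s hs
            obtain ⟨e, he⟩ := hS s hs
            exact ⟨e, by show φp s ^ k ^ e = 1; rw [← map_pow, he, map_one]⟩
          have : g ∈ Tp := hST (by rw [← hgen]; trivial)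
          exact this
        intro q hq
        rw [hΓc, Subgroup.commutator_def] at hq
        induction hq using Subgroup.closure_induction with
        | mem x hx =>
          obtain ⟨p, hp, g, -, rfl⟩ := hx
          exact gentor p hp g
        | one => exact ⟨0, one_pow _⟩
        | mul x y hx hy ihx ihy =>
          have hxΓ : x ∈ Γ := by
            rw [hΓc, Subgroup.commutator_def]
            exact hx
          exact mulcase x y hxΓ ihx ihy
        | inv x hx ihx => exact invcase x ihx
    -- pass to the quotient by Γ
    haveI hΓn : Γ.Normal := Subgroup.lowerCentralSeries_normal ⊤ c
    let φ := QuotientGroup.mk' Γ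
    have hsurj : Function.Surjective φ := QuotientGroup.mk'_surjective Γ
    have hC' : (⊤ : Subgroup (G ⧸ Γ)).lowerCentralSeries c = ⊥ := by
      rw [← lcs_map_surj φ hsurj c, Subgroup.map_eq_bot_iff, QuotientGroup.ker_mk']
    have hgen' : (⊤ : Subgroup (G ⧸ Γ)) = Subgroup.closure (φ '' S) := by
      rw [← MonoidHom.map_closure, ← hgen, Subgroup.map_top_of_surjective φ hsurj]
    have hS' : ∀ g ∈ φ '' S, ∃ e : ℕ, g ^ k ^ e = 1 := by
      rintro _ ⟨g, hg, rfl⟩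
      obtain ⟨e, he⟩ := hS g hg
      exact ⟨e, by rw [← map_pow, he, map_one]⟩
    obtain ⟨e, he⟩ := ih (G ⧸ Γ) hC' k (φ '' S) hgen' hS' (φ h)
    have hmem : h ^ k ^ e ∈ Γ := by
      rw [← QuotientGroup.ker_mk' Γ]
      show φ (h ^ k ^ e) = 1
      rw [map_pow, he]
    obtain ⟨f, hf⟩ := torsionΓ _ hmem
    exact ⟨e + f, by rw [pow_add, pow_mul, hf]⟩

/-- closure version of the torsion engine -/
theorem lemmaT_closure {G : Type u} [Group G] {c : ℕ} (hC : (⊤ : Subgroup G).lowerCentralSeries c = ⊥)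
    (k : ℕ) (S : Set G) (hS : ∀ g ∈ S, ∃ e : ℕ, g ^ k ^ e = 1) {h : G}
    (hh : h ∈ Subgroup.closure S) : ∃ e : ℕ, h ^ k ^ e = 1 := by
  set K := Subgroup.closure S with hK
  have hKc : (⊤ : Subgroup (↥K)).lowerCentralSeries c = ⊥ := lcs_subtype_bot' K hC
  have hgen : (⊤ : Subgroup ↥K) = Subgroup.closure (((↑) : ↥K → G) ⁻¹' S) :=
    (Subgroup.closure_closure_coe_preimage).symm
  have hS' : ∀ g ∈ (((↑) : ↥K → G) ⁻¹' S), ∃ e : ℕ, g ^ k ^ e = 1 := by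
    intro g hg
    obtain ⟨e, he⟩ := hS _ hg
    exact ⟨e, Subtype.ext (by simpa using he)⟩
  obtain ⟨e, he⟩ := lemmaT c (↥K) hKc k _ hgen hS' ⟨h, hh⟩
  refine ⟨e, ?_⟩
  have := congrArg ((↑) : ↥K → G) he
  simpa using this

/-- Key commutator lemma (P. Hall style): if `⁅u^M, v⁆` is `k`-power torsion with
`M` dividing a power of `k`, then `⁅u, v⁆` is `k`-power torsion. -/
theorem lemmaB (c : ℕ) : ∀ (G : Type u) [Group G], (⊤ : Subgroup G).lowerCentralSeries c = ⊥ →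
    ∀ (k M T : ℕ) (u v : G), (∃ α : ℕ, M ∣ k ^ α) → (∃ β : ℕ, T ∣ k ^ β) →
    ⁅u ^ M, v⁆ ^ T = 1 → ∃ e : ℕ, ⁅u, v⁆ ^ k ^ e = 1 := by
  induction c with
  | zero =>
    intro G _ hC k M T u v _ _ _
    rw [Subgroup.lowerCentralSeries_zero] at hC
    have : ⁅u, v⁆ ∈ (⊥ : Subgroup G) := by rw [← hC]; trivial
    rw [Subgroup.mem_bot] at this
    exact ⟨0, by rw [this, one_pow]⟩
  | succ c ih =>
    intro G _ hC k M T u v hM hT hUV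
    set Γ := (⊤ : Subgroup G).lowerCentralSeries c with hΓdef
    have hcent : ∀ γ ∈ Γ, ∀ g : G, γ * g = g * γ := by
      intro γ hγ g
      have h1 : ⁅γ, g⁆ ∈ ⁅Γ, (⊤ : Subgroup G)⁆ :=
        Subgroup.commutator_mem_commutator hγ (Subgroup.mem_top g)
      have h2 : ⁅γ, g⁆ ∈ (⊤ : Subgroup G).lowerCentralSeries (c + 1) := h1
      rw [hC, Subgroup.mem_bot] at h2
      exact commutatorElement_eq_one_iff_mul_comm.mp h2
    haveI hΓn : Γ.Normal := Subgroup.lowerCentralSeries_normal ⊤ c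
    set φq := QuotientGroup.mk' Γ with hφq
    have hsurj : Function.Surjective φq := QuotientGroup.mk'_surjective Γ
    have hC' : (⊤ : Subgroup (G ⧸ Γ)).lowerCentralSeries c = ⊥ := by
      rw [← lcs_map_surj φq hsurj c, Subgroup.map_eq_bot_iff, QuotientGroup.ker_mk']
    -- step 1 : apply the induction hypothesis in the quotient
    obtain ⟨e₁, he₁⟩ := ih (G ⧸ Γ) hC' k M T (φq u) (φq v) hM hT
      (by rw [← map_pow, ← map_commutatorElement, ← map_pow, hUV, map_one])
    set w := ⁅u, v⁆ with hw
    set s := k ^ e₁ with hs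
    set z := w ^ s with hz
    have hzΓ : z ∈ Γ := by
      rw [← QuotientGroup.ker_mk' Γ]
      show φq (w ^ s) = 1
      rw [map_pow, hw, map_commutatorElement]
      exact he₁
    have hzc : ∀ g : G, z * g = g * z := hcent z hzΓ
    have hzconj : ∀ r : ℕ, ∀ g : G, g * z ^ r * g⁻¹ = z ^ r := by
      intro r g
      have hcom : z ^ r * g = g * z ^ r := (Commute.pow_left (hzc g) r).eq
      rw [← hcom, mul_inv_cancel_right]
    -- the subgroup W generated by the ⟨u⟩-conjugates of w
    set SW : Set G := {x : G | ∃ i : ℤ, x = u ^ i * w * u ^ (-i)} with hSW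
    set W := Subgroup.closure SW with hWdef
    have hwSW : w ∈ SW := ⟨0, by simp⟩
    have hwW : w ∈ W := Subgroup.subset_closure hwSW
    have hgpow : ∀ a ∈ SW, a ^ s = z := by
      rintro a ⟨i, rfl⟩
      rw [zpow_neg, conj_pow, ← hz, ← hzc (u ^ i), mul_assoc, mul_inv_cancel, mul_one]
    have hWle : W ≤ (⊤ : Subgroup G).lowerCentralSeries 1 := by
      rw [hWdef, Subgroup.closure_le]
      rintro a ⟨i, rfl⟩
      have hw1 : w ∈ (⊤ : Subgroup G).lowerCentralSeries 1 :=
        Subgroup.commutator_mem_commutator (Subgroup.mem_top u) (Subgroup.mem_top v)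
      have := (Subgroup.lowerCentralSeries_normal (G := G) ⊤ 1).conj_mem w hw1 (u ^ i)
      rw [zpow_neg]
      exact this
    have hWc : (⊤ : Subgroup (↥W)).lowerCentralSeries c = ⊥ := by
      apply lcs_subtype_bot
      have h1 := lcs_subtype_shift W hWle c
      rw [hC] at h1
      exact h1
    -- u-conjugation preserges W
    have hconjW : ∀ x ∈ W, u * x * u⁻¹ ∈ W ∧ u⁻¹ * x * u ∈ W := by
      intro x hx
      induction hx using Subgroup.closure_induction with
      | mem a ha =>
        obtain ⟨i, rfl⟩ := ha
        constructor
        · exact Subgroup.subset_closure ⟨i + 1, by group⟩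
        · exact Subgroup.subset_closure ⟨i - 1, by group⟩
      | one => constructor <;> simpa using Subgroup.one_mem W
      | mul a b ha hb iha ihb =>
        constructor
        · have : u * (a * b) * u⁻¹ = (u * a * u⁻¹) * (u * b * u⁻¹) := by group
          rw [this]
          exact Subgroup.mul_mem W iha.1 ihb.1
        · have : u⁻¹ * (a * b) * u = (u⁻¹ * a * u) * (u⁻¹ * b * u) := by group
          rw [this]
          exact Subgroup.mul_mem W iha.2 ihb.2
      | inv a ha iha =>
        constructor
        · have : u * a⁻¹ * u⁻¹ = (u * a * u⁻¹)⁻¹ := by group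
          rw [this]
          exact Subgroup.inv_mem W iha.1
        · have : u⁻¹ * a⁻¹ * u = (u⁻¹ * a * u)⁻¹ := by group
          rw [this]
          exact Subgroup.inv_mem W iha.2
    -- pairwise commutators of generators are k-power torsion
    have hpair : ∀ a ∈ SW, ∀ b ∈ SW, ∃ e : ℕ, ⁅a, b⁆ ^ k ^ e = 1 := by
      intro a ha b hb
      have haW : a ∈ W := Subgroup.subset_closure ha
      have hbW : b ∈ W := Subgroup.subset_closure hb
      have hyp : ⁅(⟨a, haW⟩ : ↥W) ^ s, (⟨b, hbW⟩ : ↥W)⁆ ^ 1 = 1 := by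
        apply Subtype.ext
        push_cast
        rw [pow_one]
        show ⁅a ^ s, b⁆ = 1
        rw [hgpow a ha]
        exact commutatorElement_eq_one_iff_mul_comm.mpr (hzc b)
      obtain ⟨e, he⟩ := ih (↥W) hWc k s 1 ⟨a, haW⟩ ⟨b, hbW⟩ ⟨e₁, dvd_refl _⟩ ⟨0, one_dvd _⟩ hyp
      refine ⟨e, ?_⟩
      have := congrArg ((↑) : ↥W → G) he
      simp at this; exact this
    -- the subgroup of k-power torsion elements
    set τ := Subgroup.closure {x : G | ∃ e : ℕ, x ^ k ^ e = 1} with hτdef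
    have hτ : ∀ x ∈ τ, ∃ e : ℕ, x ^ k ^ e = 1 := by
      intro x hx
      exact lemmaT_closure hC k _ (fun g hg => hg) hx
    haveI hτn : τ.Normal := by
      constructor
      intro n hn g
      obtain ⟨e, he⟩ := hτ n hn
      apply Subgroup.subset_closure
      exact ⟨e, by rw [conj_pow, he, mul_one, mul_inv_cancel]⟩
    set ψ := QuotientGroup.mk' τ with hψ
    have hψtor : ∀ x : G, (∃ e : ℕ, x ^ k ^ e = 1) → ψ x = 1 := by
      intro x hx
      have : x ∈ τ := Subgroup.subset_closure hx
      rwa [← QuotientGroup.ker_mk' τ, MonoidHom.mem_ker] at this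
    -- images of W elements commute
    have hψcomm : ∀ a ∈ W, ∀ b ∈ W, Commute (ψ a) (ψ b) := by
      intro a ha b hb
      have hmem : ∀ x ∈ W, ψ x ∈ Subgroup.closure (ψ '' SW) := by
        intro x hx
        have : ψ x ∈ Subgroup.map ψ W := ⟨x, hx, rfl⟩
        rwa [hWdef, MonoidHom.map_closure] at this
      apply closure_comm (S := ψ '' SW) ?_ (hmem a ha) (hmem b hb)
      rintro _ ⟨p, hp, rfl⟩ _ ⟨q, hq, rfl⟩
      rw [← commutatorElement_eq_one_iff_commute, ← map_commutatorElement]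
      exact hψtor _ (hpair p hp q hq)
    -- main inductive claim
    have hclaim : ∀ r : ℕ, ⁅u ^ r, v⁆ ∈ W ∧ ψ ⁅u ^ r, v⁆ ^ s = ψ z ^ r := by
      intro r
      induction r with
      | zero =>
        constructor
        · rw [pow_zero, commutatorElement_one_left]
          exact Subgroup.one_mem W
        · rw [pow_zero, pow_zero, commutatorElement_one_left, map_one, one_pow]
      | succ r ihr =>
        have idext : ⁅u ^ (r + 1), v⁆ = (u * ⁅u ^ r, v⁆ * u⁻¹) * ⁅u, v⁆ := by
          simp only [commutatorElement_def, pow_succ']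
          group
        have hPW : u * ⁅u ^ r, v⁆ * u⁻¹ ∈ W := (hconjW _ ihr.1).1
        constructor
        · rw [idext]
          exact Subgroup.mul_mem W hPW hwW
        · rw [idext, map_mul, (hψcomm _ hPW _ hwW).mul_pow]
          have h1 : ψ (u * ⁅u ^ r, v⁆ * u⁻¹) ^ s = ψ z ^ r := by
            rw [← map_pow, conj_pow, ← map_pow ψ z r]
            have h2 : ⁅u ^ r, v⁆ ^ s ∈ W := Subgroup.pow_mem W ihr.1 s
            have h3 : ψ (⁅u ^ r, v⁆ ^ s) = ψ (z ^ r) := by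
              rw [map_pow, map_pow]
              exact ihr.2
            rw [map_mul, map_mul, h3, ← map_mul, ← map_mul, hzconj r u, map_pow]
          rw [h1]
          have h4 : ψ ⁅u, v⁆ ^ s = ψ z := by
            rw [← map_pow, ← hw, ← hz]
          rw [h4, pow_succ]
    -- conclude
    obtain ⟨hMW, hMψ⟩ := hclaim M
    have hzMT : ψ (z ^ (M * T)) = 1 := by
      rw [map_pow, pow_mul, ← hMψ, ← pow_mul, mul_comm s T, pow_mul, ← map_pow,
        hUV, map_one, one_pow]
    have hzmem : z ^ (M * T) ∈ τ := by
      rwa [← QuotientGroup.ker_mk' τ, MonoidHom.mem_ker]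
    obtain ⟨f, hf⟩ := hτ _ hzmem
    -- w ^ (s * (M * T * k ^ f)) = 1
    obtain ⟨α, hα⟩ := hM
    obtain ⟨β, hβ⟩ := hT
    have hwpow : w ^ (s * (M * T * k ^ f)) = 1 := by
      rw [show s * (M * T * k ^ f) = s * (M * T) * k ^ f by ring, pow_mul, pow_mul, ← hz]
      exact hf
    have hdvd : s * (M * T * k ^ f) ∣ k ^ (e₁ + α + β + f) := by
      rw [hs]
      have : k ^ (e₁ + α + β + f) = k ^ e₁ * (k ^ α * k ^ β * k ^ f) := by ring
      rw [this]
      exact mul_dvd_mul_left _ (mul_dvd_mul (mul_dvd_mul hα hβ) dvd_rfl)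
    obtain ⟨q, hq⟩ := hdvd
    exact ⟨e₁ + α + β + f, by rw [hq, pow_mul, hwpow, one_pow]⟩

theorem cruxLemma {G : Type u} [Group G] {i j : ℕ}
    (hC : (⊤ : Subgroup G).lowerCentralSeries (i + j + 1) = ⊥) {x y : G} {m n : ℕ}
    (hx : x ^ m ∈ (⊤ : Subgroup G).lowerCentralSeries i) (hy : y ^ n ∈ (⊤ : Subgroup G).lowerCentralSeries j) :
    ∃ e : ℕ, ⁅x, y⁆ ^ (m * n) ^ e = 1 := by
  have h1 : ⁅x ^ m, y ^ n⁆ = 1 := by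
    have hmem : ⁅x ^ m, y ^ n⁆ ∈ ⁅(⊤ : Subgroup G).lowerCentralSeries i, (⊤ : Subgroup G).lowerCentralSeries j⁆ :=
      Subgroup.commutator_mem_commutator hx hy
    have := lcs_comm (G := G) j i hmem
    rw [hC, Subgroup.mem_bot] at this
    exact this
  have h2 : ⁅x ^ m, y ^ n⁆ ^ 1 = 1 := by rw [pow_one]; exact h1
  obtain ⟨e₁, he₁⟩ := lemmaB (i + j + 1) G hC (m * n) m 1 x (y ^ n)
    ⟨1, by rw [pow_one]; exact dvd_mul_right m n⟩ ⟨0, one_dvd _⟩ h2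
  have h3 : ⁅y ^ n, x⁆ ^ (m * n) ^ e₁ = 1 := by
    rw [← commutatorElement_inv, inv_pow, he₁, inv_one]
  obtain ⟨e₂, he₂⟩ := lemmaB (i + j + 1) G hC (m * n) n ((m * n) ^ e₁) y x
    ⟨1, by rw [pow_one]; exact dvd_mul_left n m⟩ ⟨e₁, dvd_rfl⟩ h3
  exact ⟨e₂, by rw [← commutatorElement_inv, inv_pow, he₂, inv_one]⟩

theorem IsPiNumber.mul' {π : Set ℕ} {m n : ℕ} (hm : IsPiNumber π m) (hn : IsPiNumber π n) :
    IsPiNumber π (m * n) := by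
  refine ⟨Nat.mul_pos hm.1 hn.1, fun p hp hpd => ?_⟩
  rcases (Nat.Prime.dvd_mul hp).mp hpd with h | h
  · exact hm.2 p hp h
  · exact hn.2 p hp h

theorem IsPiNumber.pow' {π : Set ℕ} {m : ℕ} (hm : IsPiNumber π m) (e : ℕ) :
    IsPiNumber π (m ^ e) :=
  ⟨Nat.pow_pos (n := e) hm.1, fun p hp hpd => hm.2 p hp (Nat.Prime.dvd_of_dvd_pow hp hpd)⟩

/-- `(⊤ : Subgroup G).lowerCentralSeries i` is `γ_{i+1}(G)` in the paper's indexing, so the claim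
`[G_i, G_j] ≤ G_{i+j}` (for `i, j ≥ 1`) becomes the statement below. -/
theorem isolator_commutator_le (G : Type*) [Group G] [Group.IsNilpotent G]
    (π : Set ℕ) (i j : ℕ) (Gi Gj Gk : Subgroup G)
    (hGi : (Gi : Set G) = {g : G | ∃ n : ℕ, IsPiNumber π n ∧ g ^ n ∈ (⊤ : Subgroup G).lowerCentralSeries i})
    (hGj : (Gj : Set G) = {g : G | ∃ n : ℕ, IsPiNumber π n ∧ g ^ n ∈ (⊤ : Subgroup G).lowerCentralSeries j})
    (hGk : (Gk : Set G) =
      {g : G | ∃ n : ℕ, IsPiNumber π n ∧ g ^ n ∈ (⊤ : Subgroup G).lowerCentralSeries (i + j + 1)}) :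
    ⁅Gi, Gj⁆ ≤ Gk := by
  rw [Subgroup.commutator_le]
  intro g₁ hg₁ g₂ hg₂
  have h1 : g₁ ∈ (Gi : Set G) := hg₁
  have h2 : g₂ ∈ (Gj : Set G) := hg₂
  rw [hGi] at h1
  rw [hGj] at h2
  obtain ⟨m, hm, hxm⟩ := h1
  obtain ⟨n, hn, hyn⟩ := h2
  set N := (⊤ : Subgroup G).lowerCentralSeries (i + j + 1) with hN
  haveI : N.Normal := Subgroup.lowerCentralSeries_normal ⊤ (i + j + 1)
  set φ := QuotientGroup.mk' N with hφ
  have hsurj : Function.Surjective φ := QuotientGroup.mk'_surjective N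
  have hCq : (⊤ : Subgroup (G ⧸ N)).lowerCentralSeries (i + j + 1) = ⊥ := by
    rw [← lcs_map_surj φ hsurj (i + j + 1), Subgroup.map_eq_bot_iff, QuotientGroup.ker_mk']
  have hxq : (φ g₁) ^ m ∈ (⊤ : Subgroup (G ⧸ N)).lowerCentralSeries i := by
    rw [← map_pow]
    exact Subgroup.lowerCentralSeries.map φ i ⟨g₁ ^ m, hxm, rfl⟩
  have hyq : (φ g₂) ^ n ∈ (⊤ : Subgroup (G ⧸ N)).lowerCentralSeries j := by
    rw [← map_pow]
    exact Subgroup.lowerCentralSeries.map φ j ⟨g₂ ^ n, hyn, rfl⟩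
  obtain ⟨e, he⟩ := cruxLemma hCq hxq hyq
  have hmem : ⁅g₁, g₂⁆ ^ (m * n) ^ e ∈ N := by
    rw [← QuotientGroup.ker_mk' N, MonoidHom.mem_ker, map_pow, map_commutatorElement]
    exact he
  show ⁅g₁, g₂⁆ ∈ Gk
  have : ⁅g₁, g₂⁆ ∈ (Gk : Set G) := by
    rw [hGk]
    exact ⟨(m * n) ^ e, (hm.mul' hn).pow' e, hmem⟩
  exact this
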